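/- Let G be a locally finite infinite graph and 𝒞 a nested set of regions of G (any two regions in 𝒞 are disjoint or one contains the other) whose corresponding open sets form, together with open stars and open edge intervals, a basis of the Freudenthal compactification |G|. If δ(G) ≥ k and δ⁺_G(C) ≥ k for every C ∈ 𝒞, then G has a finite nonempty subgraph of minimum degree at least k. -/

import Mathlib

open SimpleGraph Set

universe u
variable {V : Type u}

/-- A graph is locally finite if every vertex has finite neighbourhood. -/
def LocFin (G : SimpleGraph V) : Prop := ∀ v, (G.neighborSet v).Finite

/-- The vertex boundary `V⁺(U)`: vertices of `U` with a neighbour outside `U`. -/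
def vBdry (G : SimpleGraph V) (U : Set V) : Set V :=
  {v | v ∈ U ∧ ∃ w, w ∉ U ∧ G.Adj v w}

/-- The neighbourhood `N(U)` of a vertex set `U`: vertices outside `U` adjacent to `U`. -/
def nbhd (G : SimpleGraph V) (U : Set V) : Set V :=
  {w | w ∉ U ∧ ∃ v ∈ U, G.Adj v w}

/-- Degree of `v` in the subgraph of `G` induced on the vertex set `A`. -/
noncomputable def degIn (G : SimpleGraph V) (A : Set V) (v : V) : ℕ :=
  (A ∩ G.neighborSet v).ncard

/-- `C` is (the vertex set of) a component of `G - S`. -/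
def IsCompOf (G : SimpleGraph V) (S C : Set V) : Prop :=
  C.Nonempty ∧ C ∩ S = ∅ ∧ (G.induce C).Connected ∧
    ∀ v ∈ C, ∀ w, w ∉ S → G.Adj v w → w ∈ C

/-- A region of `G`: a (nonempty) connected induced subgraph with finite vertex boundary. -/
def IsRegion (G : SimpleGraph V) (C : Set V) : Prop :=
  (G.induce C).Connected ∧ (vBdry G C).Finite

/-- `δ⁺_G(C) ≥ k`: every boundary vertex of `C` has degree at least `k`
in the graph `G[S, C]` induced on `N(C) ∪ V⁺(C)`. -/
def minOutDegGE (G : SimpleGraph V) (C : Set V) (k : ℕ) : Prop :=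
  ∀ v ∈ vBdry G C, k ≤ degIn G (nbhd G C ∪ vBdry G C) v

/-- `f : ℕ → V` is a ray (one-way infinite path) in `G`. -/
def IsRay (G : SimpleGraph V) (f : ℕ → V) : Prop :=
  Function.Injective f ∧ ∀ n, G.Adj (f n) (f (n + 1))

/-- The ray `f` has a tail inside the vertex set `C`. -/
def HasTailIn (f : ℕ → V) (C : Set V) : Prop := ∃ N, ∀ n, N ≤ n → f n ∈ C

/-- Two rays are equivalent (belong to the same end) iff no finite vertex set
separates them: for every finite `S` they have tails in a common component of `G - S`. -/
def RayEquiv (G : SimpleGraph V) (f g : ℕ → V) : Prop :=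
  ∀ S : Set V, S.Finite → ∃ C, IsCompOf G S C ∧ HasTailIn f C ∧ HasTailIn g C

namespace Stmt13Aux

/-- Restriction of `G` to a vertex set `A`, as a graph on all of `V`. -/
def RG (G : SimpleGraph V) (A : Set V) : SimpleGraph V where
  Adj x y := G.Adj x y ∧ x ∈ A ∧ y ∈ A
  symm := ⟨fun x y h => ⟨h.1.symm, h.2.2, h.2.1⟩⟩
  loopless := ⟨fun x h => G.loopless.irrefl x h.1⟩

lemma RG_le (G : SimpleGraph V) (A : Set V) : RG G A ≤ G := fun _ _ h => h.1

/-- Connected component of `x` in the restriction of `G` to `A`. -/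
def comp (G : SimpleGraph V) (A : Set V) (x : V) : Set V := {y | (RG G A).Reachable x y}

lemma mem_comp_self (G : SimpleGraph V) (A : Set V) (x : V) : x ∈ comp G A x :=
  Reachable.refl x

lemma reach_mem {G : SimpleGraph V} {A : Set V} {x y : V}
    (h : (RG G A).Reachable x y) : x ∈ A → y ∈ A := by
  obtain ⟨W⟩ := h
  induction W with
  | nil => exact id
  | cons h p ih => exact fun _ => ih h.2.2

lemma comp_subset {G : SimpleGraph V} {A : Set V} {x : V} (hx : x ∈ A) :
    comp G A x ⊆ A := fun _ hy => reach_mem hy hx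

lemma comp_eq_of_mem {G : SimpleGraph V} {A : Set V} {x y : V} (h : y ∈ comp G A x) :
    comp G A y = comp G A x :=
  Set.ext fun _ => ⟨fun hz => h.trans hz, fun hz => (Reachable.symm h).trans hz⟩

lemma RG_adj {G : SimpleGraph V} {A : Set V} {x y : V} :
    (RG G A).Adj x y ↔ G.Adj x y ∧ x ∈ A ∧ y ∈ A := Iff.rfl

lemma comp_mono {G : SimpleGraph V} {A A' : Set V} (hAA' : A ⊆ A') (x : V) :
    comp G A x ⊆ comp G A' x := by
  intro y hy
  refine Reachable.mono (G := RG G A) (G' := RG G A') ?_ hy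
  intro a b h
  rw [RG_adj] at h ⊢
  exact ⟨h.1, hAA' h.2.1, hAA' h.2.2⟩

/-- Absorption: if no vertex of `A` is in the outer neighbourhood of `C`, then a
component of `A` meeting `C` is contained in `C`. -/
lemma reach_subset_C {G : SimpleGraph V} {A C : Set V}
    (hA : ∀ w, w ∈ nbhd G C → w ∈ A → False) {x y : V}
    (h : (RG G A).Reachable x y) : x ∈ C → y ∈ C := by
  obtain ⟨W⟩ := h
  induction W with
  | nil => exact id
  | @cons a b c h p ih =>
    intro hxC
    apply ih
    by_contra hbC
    exact hA b ⟨hbC, a, hxC, h.1⟩ h.2.2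

/-- Build the required subgraph from a finite vertex set of large internal degree. -/
lemma buildSubgraph (G : SimpleGraph V) (k : ℕ) (A : Set V) (hfin : A.Finite)
    (hne : A.Nonempty) (hdegA : ∀ v ∈ A, k ≤ (A ∩ G.neighborSet v).ncard) :
    ∃ H : G.Subgraph, H.verts.Finite ∧ H.verts.Nonempty ∧
      ∀ w ∈ H.verts, k ≤ (H.neighborSet w).ncard := by
  refine ⟨⟨A, fun a b => G.Adj a b ∧ a ∈ A ∧ b ∈ A, fun h => h.1, fun h => h.2.1,
    ⟨fun a b h => ⟨h.1.symm, h.2.2, h.2.1⟩⟩⟩, hfin, hne, ?_⟩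
  intro w hw
  have hset : {v | G.Adj w v ∧ w ∈ A ∧ v ∈ A} = A ∩ G.neighborSet w := by
    ext v
    constructor
    · rintro ⟨h1, _, h3⟩; exact ⟨h3, h1⟩
    · rintro ⟨h1, h2⟩; exact ⟨h2, hw, h1⟩
  show k ≤ Set.ncard {v | G.Adj w v ∧ w ∈ A ∧ v ∈ A}
  rw [hset]
  exact hdegA w hw

/-- Simple iteration. -/
def iter {α : Type*} (F : ℕ → α → α) (a₀ : α) : ℕ → α
  | 0 => a₀
  | n + 1 => F n (iter F a₀ n)

/-- Dependent choice along ℕ. -/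
lemma dep_choice {α : Type*} (P : ℕ → α → Prop) (R : ℕ → α → α → Prop) (a₀ : α)
    (h0 : P 0 a₀) (hstep : ∀ n a, P n a → ∃ b, P (n + 1) b ∧ R n a b) :
    ∃ f : ℕ → α, f 0 = a₀ ∧ (∀ n, P n (f n)) ∧ ∀ n, R n (f n) (f (n + 1)) := by
  classical
  choose F hF1 hF2 using hstep
  refine ⟨iter (fun n a => if h : P n a then F n a h else a₀) a₀, rfl, ?_, ?_⟩
  · intro n
    induction n with
    | zero => exact h0
    | succ n ih =>
      show P (n + 1) (if h : P n _ then F n _ h else a₀)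
      rw [dif_pos ih]
      exact hF1 n _ ih
  · have hP : ∀ n, P n (iter (fun n a => if h : P n a then F n a h else a₀) a₀ n) := by
      intro n
      induction n with
      | zero => exact h0
      | succ n ih =>
        show P (n + 1) (if h : P n _ then F n _ h else a₀)
        rw [dif_pos ih]
        exact hF1 n _ ih
    intro n
    show R n _ (if h : P n _ then F n _ h else a₀)
    rw [dif_pos (hP n)]
    exact hF2 n _ (hP n)

lemma infinite_of_unbdd {T : Set ℕ} (h : ∀ N, ∃ m ∈ T, N ≤ m) : T.Infinite := by
  by_contra hfin
  rw [Set.not_infinite] at hfin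
  obtain ⟨n, hn⟩ := hfin.bddAbove
  obtain ⟨m, hm, hNm⟩ := h (n + 1)
  have := hn hm
  omega

lemma unbdd_of_infinite {T : Set ℕ} (h : T.Infinite) : ∀ N, ∃ m ∈ T, N ≤ m := by
  intro N
  by_contra hc
  push_neg at hc
  exact h (Set.Finite.subset (Set.finite_Iio N) fun m hm => hc m hm)

lemma pigeon {T : Set ℕ} (hT : T.Infinite) (φ : ℕ → Set V) {S : Set (Set V)}
    (hS : S.Finite) (hφ : ∀ m ∈ T, φ m ∈ S) :
    ∃ D ∈ S, {m | m ∈ T ∧ φ m = D}.Infinite := by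
  by_contra h
  push_neg at h
  have hsub : T ⊆ ⋃ D ∈ S, {m | m ∈ T ∧ φ m = D} :=
    fun m hm => Set.mem_biUnion (hφ m hm) ⟨hm, rfl⟩
  exact hT (Set.Finite.subset
    (hS.biUnion fun D hD => (h D hD)) hsub)

end Stmt13Aux

section Chunk2
variable {V : Type u}
namespace Stmt13Aux

variable (G : SimpleGraph V) (v₀ : V)

/-- The component of `v₀` in `G`. -/
def K : Set V := {w | G.Reachable v₀ w}

/-- The ball of radius `n` about `v₀`. -/
def B (n : ℕ) : Set V := {w | w ∈ K G v₀ ∧ G.dist v₀ w ≤ n}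

variable {G v₀}

lemma v₀_mem_K : v₀ ∈ K G v₀ := Reachable.refl v₀

lemma mem_K_of_adj {v w : V} (hv : v ∈ K G v₀) (h : G.Adj v w) : w ∈ K G v₀ :=
  Reachable.trans hv h.reachable

lemma v₀_mem_B (n : ℕ) : v₀ ∈ B G v₀ n := ⟨v₀_mem_K, by simp [SimpleGraph.dist_self]⟩

lemma B_mono {m n : ℕ} (h : m ≤ n) : B G v₀ m ⊆ B G v₀ n :=
  fun _ hw => ⟨hw.1, le_trans hw.2 h⟩

lemma B_subset_K (n : ℕ) : B G v₀ n ⊆ K G v₀ := fun _ hw => hw.1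

lemma mem_B_dist {w : V} (hw : w ∈ K G v₀) : w ∈ B G v₀ (G.dist v₀ w) := ⟨hw, le_refl _⟩

lemma B_finite (hG : LocFin G) (n : ℕ) : (B G v₀ n).Finite := by
  induction n with
  | zero =>
    apply (Set.finite_singleton v₀).subset
    rintro w ⟨hwK, hd⟩
    have : G.dist v₀ w = 0 := Nat.le_zero.mp hd
    have := (SimpleGraph.Reachable.dist_eq_zero_iff hwK).mp this
    simp [this.symm]
  | succ n ih =>
    apply (ih.union (ih.biUnion fun u _ => hG u)).subset
    rintro w ⟨hwK, hd⟩
    obtain ⟨p, hp⟩ := SimpleGraph.Reachable.exists_walk_length_eq_dist hwK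
    rcases Nat.lt_or_ge (G.dist v₀ w) (n + 1) with hlt | hge
    · exact Or.inl ⟨hwK, by omega⟩
    · have hlen : p.reverse.length = n + 1 := by
        rw [SimpleGraph.Walk.length_reverse, hp]; omega
      right
      cases hrev : p.reverse with
      | nil => rw [hrev] at hlen; simp at hlen
      | @cons _ b _ ha q =>
        rw [hrev] at hlen
        simp only [SimpleGraph.Walk.length_cons] at hlen
        have hbK : b ∈ K G v₀ := ⟨q.reverse⟩
        have hbd : G.dist v₀ b ≤ n := by
          have h2 := SimpleGraph.dist_le q.reverse
          rw [SimpleGraph.Walk.length_reverse] at h2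
          omega
        exact Set.mem_biUnion (⟨hbK, hbd⟩ : b ∈ B G v₀ n) ha.symm

lemma finite_subset_B {F : Set V} (hFK : F ⊆ K G v₀) (hF : F.Finite) :
    ∃ n, F ⊆ B G v₀ n := by
  obtain ⟨n, hn⟩ := (hF.image (G.dist v₀)).bddAbove
  exact ⟨n, fun w hw => ⟨hFK hw, hn (Set.mem_image_of_mem _ hw)⟩⟩

variable (G v₀)

/-- `D` is a component of `G` minus the ball of radius `n`. -/
def CompAt (n : ℕ) (D : Set V) : Prop :=
  ∃ x, x ∈ K G v₀ \ B G v₀ n ∧ D = comp G (K G v₀ \ B G v₀ n) x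

variable {G v₀}

lemma CompAt.subset {n : ℕ} {D : Set V} (h : CompAt G v₀ n D) :
    D ⊆ K G v₀ \ B G v₀ n := by
  obtain ⟨x, hx, rfl⟩ := h
  exact comp_subset hx

lemma CompAt.eq_comp {n : ℕ} {D : Set V} (h : CompAt G v₀ n D) {y : V} (hy : y ∈ D) :
    D = comp G (K G v₀ \ B G v₀ n) y := by
  obtain ⟨x, hx, rfl⟩ := h
  exact (comp_eq_of_mem hy).symm

/-- Every component of `G - Bₙ` has a vertex adjacent to `Bₙ`. -/
lemma comp_rep (n : ℕ) {x : V} (hx : x ∈ K G v₀ \ B G v₀ n) :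
    ∃ y ∈ comp G (K G v₀ \ B G v₀ n) x, ∃ z ∈ B G v₀ n, G.Adj z y := by
  obtain ⟨p⟩ := hx.1
  have main : ∀ (x w : V), ∀ _ : G.Walk x w, w ∈ B G v₀ n → x ∈ K G v₀ \ B G v₀ n →
      ∃ y ∈ comp G (K G v₀ \ B G v₀ n) x, ∃ z ∈ B G v₀ n, G.Adj z y := by
    intro x w q
    induction q with
    | nil => exact fun hw hx => absurd hw hx.2
    | @cons a b c ha q ih =>
      intro hw hx
      by_cases hb : b ∈ B G v₀ n
      · exact ⟨a, mem_comp_self G _ a, b, hb, ha.symm⟩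
      · have hbK : b ∈ K G v₀ := mem_K_of_adj hx.1 ha
        obtain ⟨y, hy, z, hz, hadj⟩ := ih hw ⟨hbK, hb⟩
        refine ⟨y, ?_, z, hz, hadj⟩
        exact Reachable.trans (SimpleGraph.Adj.reachable
          (RG_adj.mpr ⟨ha, hx, ⟨hbK, hb⟩⟩)) hy
  exact main x v₀ p.reverse (v₀_mem_B n) hx

lemma compAt_finite (hG : LocFin G) (n : ℕ) : {D : Set V | CompAt G v₀ n D}.Finite := by
  have hW : {y : V | ∃ z ∈ B G v₀ n, G.Adj z y}.Finite := by
    apply ((B_finite hG n).biUnion fun z _ => hG z).subset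
    rintro y ⟨z, hz, ha⟩
    exact Set.mem_biUnion hz ha
  apply (hW.image (fun y => comp G (K G v₀ \ B G v₀ n) y)).subset
  rintro D ⟨x, hx, rfl⟩
  obtain ⟨y, hy, z, hz, ha⟩ := comp_rep n hx
  exact ⟨y, ⟨z, hz, ha⟩, comp_eq_of_mem hy⟩

/-- A path list between two distinct vertices of a component. -/
lemma exists_list [Inhabited V] (G : SimpleGraph V) (A : Set V) {z x y : V}
    (hx : x ∈ comp G A z) (hy : y ∈ comp G A z) (hxy : x ≠ y) :
    ∃ l : List V, l ≠ [] ∧ l.Chain' G.Adj ∧ (∀ v ∈ l, v ∈ comp G A z) ∧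
      l.headI = x ∧ l.getLast? = some y ∧ l.tail ≠ [] := by
  classical
  obtain ⟨W⟩ : (RG G A).Reachable x y := (Reachable.symm hx).trans hy
  cases W with
  | nil => exact absurd rfl hxy
  | @cons _ b _ ha p =>
    refine ⟨(SimpleGraph.Walk.cons ha p).support, SimpleGraph.Walk.support_ne_nil _,
      ?_, ?_, ?_, ?_, ?_⟩
    · exact ((SimpleGraph.Walk.cons ha p).isChain_adj_support).imp
        fun a b h => (RG_adj.mp h).1
    · intro v hv
      exact Reachable.trans hx ⟨(SimpleGraph.Walk.cons ha p).takeUntil v hv⟩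
    · simp [SimpleGraph.Walk.support_cons]
    · rw [List.getLast?_eq_getLast_of_ne_nil (SimpleGraph.Walk.support_ne_nil _),
        SimpleGraph.Walk.getLast_support]
    · simp [SimpleGraph.Walk.support_cons]

/-- A connected induced subgraph meeting `K` is contained in `K`. -/
lemma conn_subset_K {G : SimpleGraph V} {C : Set V} (hconn : (G.induce C).Connected)
    {x : V} (hx : x ∈ C) (hxK : x ∈ K G v₀) : C ⊆ K G v₀ := by
  intro y hy
  have hr : (G.induce C).Reachable ⟨x, hx⟩ ⟨y, hy⟩ := hconn ⟨x, hx⟩ ⟨y, hy⟩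
  have : G.Reachable x y := hr.map (SimpleGraph.Embedding.induce C).toHom
  exact Reachable.trans hxK this

end Stmt13Aux
end Chunk2

section Chunk3
universe u2
variable {V : Type u}
namespace Stmt13Aux

lemma headI_mem {α : Type u2} [Inhabited α] {l : List α} (h : l ≠ []) : l.headI ∈ l := by
  cases l with
  | nil => exact absurd rfl h
  | cons a t => exact List.mem_cons_self

variable {G : SimpleGraph V} {v₀ : V}

lemma chain_step (hG : LocFin G) {x : ℕ → V} (hx : ∀ m, x m ∈ K G v₀ \ B G v₀ m)
    (n : ℕ) {T : Set ℕ} (hT : T.Infinite) (hTn : ∀ m ∈ T, n ≤ m) :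
    ∃ (D : Set V) (T' : Set ℕ), CompAt G v₀ n D ∧ T'.Infinite ∧
      (∀ m ∈ T', n + 1 ≤ m ∧ m ∈ T ∧ comp G (K G v₀ \ B G v₀ m) (x m) ⊆ D) ∧
      ∃ m₁ ∈ T, D = comp G (K G v₀ \ B G v₀ n) (x m₁) := by
  have hxA : ∀ m ∈ T, x m ∈ K G v₀ \ B G v₀ n := by
    intro m hm
    exact ⟨(hx m).1, fun hB => (hx m).2 (B_mono (hTn m hm) hB)⟩
  obtain ⟨D, hD𝒮, hfib⟩ := pigeon hT (fun m => comp G (K G v₀ \ B G v₀ n) (x m))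
    (compAt_finite hG n) (fun m hm => ⟨x m, hxA m hm, rfl⟩)
  have hfib' := hfib.diff (Set.finite_Iio (n + 1))
  obtain ⟨m₁, hm₁⟩ := hfib'.nonempty
  refine ⟨D, _, hD𝒮, hfib', ?_, m₁, hm₁.1.1, hm₁.1.2.symm⟩
  rintro m ⟨⟨hmT, hmD⟩, hge⟩
  have hge' : n + 1 ≤ m := by simpa [Set.mem_Iio] using hge
  refine ⟨hge', hmT, ?_⟩
  rw [← hmD]
  exact comp_mono (Set.diff_subset_diff_right (B_mono (by omega))) (x m)

lemma bad_contra [Inhabited V] (G : SimpleGraph V) (hG : LocFin G) (v₀ : V)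
    (𝒞 : Set (Set V))
    (hreg : ∀ C ∈ 𝒞, IsRegion G C)
    (hbasis : ∀ f, IsRay G f → ∀ S : Set V, S.Finite →
      ∃ C ∈ 𝒞, C ∩ S = ∅ ∧ HasTailIn f C)
    (hbad : ∀ n : ℕ, ∃ x ∈ K G v₀ \ B G v₀ n,
      (comp G (K G v₀ \ B G v₀ n) x).Infinite ∧
      ∀ C ∈ 𝒞, v₀ ∉ C → ¬ comp G (K G v₀ \ B G v₀ n) x ⊆ C) : False := by
  classical
  choose x hx hxinf hxbad using hbad
  -- the chain of bad components
  set P : ℕ → Set V × Set ℕ → Prop := fun n p =>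
    CompAt G v₀ n p.1 ∧ p.2.Infinite ∧
      ∀ m ∈ p.2, n + 1 ≤ m ∧ comp G (K G v₀ \ B G v₀ m) (x m) ⊆ p.1 with hP
  have hbase : ∃ a, P 0 a := by
    obtain ⟨D, T', hD, hT', hprop, -⟩ := chain_step hG hx 0 Set.infinite_univ
      (fun m _ => Nat.zero_le m)
    exact ⟨(D, T'), hD, hT', fun m hm => ⟨(hprop m hm).1, (hprop m hm).2.2⟩⟩
  obtain ⟨a₀, ha₀⟩ := hbase
  have hstep : ∀ n p, P n p → ∃ q, P (n + 1) q ∧ q.1 ⊆ p.1 := by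
    intro n p hp
    obtain ⟨D', T'', hD', hT'', hprop, m₁, hm₁T, hDeq⟩ := chain_step hG hx (n + 1)
      hp.2.1 (fun m hm => (hp.2.2 m hm).1)
    refine ⟨(D', T''), ⟨hD', hT'', fun m hm => ⟨(hprop m hm).1, (hprop m hm).2.2⟩⟩, ?_⟩
    -- D' ⊆ p.1
    have hxm : x m₁ ∈ p.1 := (hp.2.2 m₁ hm₁T).2 (mem_comp_self G _ (x m₁))
    have hp1 : p.1 = comp G (K G v₀ \ B G v₀ n) (x m₁) := CompAt.eq_comp hp.1 hxm
    rw [hDeq, hp1]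
    exact comp_mono (Set.diff_subset_diff_right (B_mono (by omega))) (x m₁)
  obtain ⟨ch, hch0, hchP, hchR⟩ := dep_choice P (fun _ p q => q.1 ⊆ p.1) a₀ ha₀ hstep
  set c : ℕ → Set V := fun n => (ch n).1 with hc
  have hcomp : ∀ n, CompAt G v₀ n (c n) := fun n => (hchP n).1
  have hcsub : ∀ n, c (n + 1) ⊆ c n := fun n => hchR n
  have hcanti : ∀ {m n : ℕ}, m ≤ n → c n ⊆ c m := by
    intro m n h
    induction n with
    | zero => rw [Nat.le_zero.mp h]
    | succ n ih =>
      rcases Nat.lt_or_ge m (n + 1) with h' | h'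
      · exact (hcsub n).trans (ih (by omega))
      · rw [le_antisymm h h']
  have hcinf : ∀ n, (c n).Infinite := by
    intro n
    obtain ⟨m, hm⟩ := (hchP n).2.1.nonempty
    exact (hxinf m).mono ((hchP n).2.2 m hm).2
  -- the sequence of vertices
  have hustep : ∀ n a, a ∈ c n → ∃ b, b ∈ c (n + 1) ∧ a ≠ b := by
    intro n a _
    obtain ⟨b, hb⟩ := ((hcinf (n + 1)).diff (Set.finite_singleton a)).nonempty
    exact ⟨b, hb.1, fun h => hb.2 (by simp [h])⟩
  obtain ⟨u0, hu0⟩ := (hcinf 0).nonempty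
  obtain ⟨u, -, hu, hune⟩ := dep_choice (fun n v => v ∈ c n) (fun _ a b => a ≠ b) u0 hu0 hustep
  -- the segments
  have hseg : ∀ n, ∃ l : List V, l ≠ [] ∧ l.Chain' G.Adj ∧ (∀ v ∈ l, v ∈ c n) ∧
      l.headI = u n ∧ l.getLast? = some (u (n + 1)) ∧ l.tail ≠ [] := by
    intro n
    have hcn : c n = comp G (K G v₀ \ B G v₀ n) (u n) := CompAt.eq_comp (hcomp n) (hu n)
    have h1 : u n ∈ comp G (K G v₀ \ B G v₀ n) (u n) := mem_comp_self G _ _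
    have h2 : u (n + 1) ∈ comp G (K G v₀ \ B G v₀ n) (u n) := by
      rw [← hcn]; exact hcsub n (hu (n + 1))
    obtain ⟨l, hl1, hl2, hl3, hl4, hl5, hl6⟩ := exists_list G _ h1 h2 (hune n)
    exact ⟨l, hl1, hl2, fun v hv => by rw [hcn]; exact hl3 v hv, hl4, hl5, hl6⟩
  choose L Lne Lch Lmem Lhead Llast Ltail using hseg
  -- the walk machine
  set P2 : ℕ → ℕ × List V → Prop := fun _ s => s.2 ≠ [] ∧ s.2.Chain' G.Adj ∧
    (∀ v ∈ s.2, v ∈ c s.1) ∧ s.2.getLast? = some (u (s.1 + 1)) with hP2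
  set R2 : ℕ → ℕ × List V → ℕ × List V → Prop := fun _ s t =>
    G.Adj s.2.headI t.2.headI ∧
      (t.1 = s.1 ∧ s.2 = s.2.headI :: t.2 ∨ t.1 = s.1 + 1 ∧ s.2.tail = []) with hR2
  have hbase2 : P2 0 (0, L 0) := ⟨Lne 0, Lch 0, Lmem 0, Llast 0⟩
  have hstep2 : ∀ i s, P2 i s → ∃ t, P2 (i + 1) t ∧ R2 i s t := by
    rintro i ⟨N, l⟩ hs
    obtain ⟨hs1, hs2, hs3, hs4⟩ := hs
    match l, hs1 with
    | [a], _ =>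
      have ha : a = u (N + 1) := by simpa using hs4
      cases hL : L (N + 1) with
      | nil => exact absurd hL (Lne (N + 1))
      | cons b rest =>
        have hb : b = u (N + 1) := by
          have := Lhead (N + 1); rw [hL] at this; simpa using this
        cases rest with
        | nil =>
          have := Ltail (N + 1); rw [hL] at this; simp at this
        | cons r0 rest' =>
          have hch' : (b :: r0 :: rest').Chain' G.Adj := by
            have := Lch (N + 1); rwa [hL] at this
          refine ⟨(N + 1, r0 :: rest'), ⟨List.cons_ne_nil _ _, hch'.tail, ?_, ?_⟩, ?_, ?_⟩
          · intro v hv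
            have := Lmem (N + 1) v (by rw [hL]; exact List.mem_cons_of_mem _ hv)
            exact this
          · have := Llast (N + 1); rw [hL, List.getLast?_cons_cons] at this
            exact this
          · show G.Adj ([a].headI) ((r0 :: rest').headI)
            have : G.Adj b r0 := (List.isChain_cons_cons.mp hch').1
            simpa [ha, ← hb] using this
          · exact Or.inr ⟨rfl, rfl⟩
    | a :: b :: l'', _ =>
      refine ⟨(N, b :: l''), ⟨List.cons_ne_nil _ _, (List.isChain_cons_cons.mp hs2).2, ?_, ?_⟩,
        ?_, Or.inl ⟨rfl, rfl⟩⟩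
      · exact fun v hv => hs3 v (List.mem_cons_of_mem _ hv)
      · rw [← hs4, List.getLast?_cons_cons]
      · exact (List.isChain_cons_cons.mp hs2).1
  obtain ⟨st, hst0, hstP, hstR⟩ := dep_choice P2 R2 (0, L 0) hbase2 hstep2
  set g : ℕ → V := fun i => (st i).2.headI with hg
  set lvl : ℕ → ℕ := fun i => (st i).1 with hlvl
  have hgadj : ∀ i, G.Adj (g i) (g (i + 1)) := fun i => (hstR i).1
  have hgmem : ∀ i, g i ∈ c (lvl i) := fun i =>
    (hstP i).2.2.1 _ (headI_mem (hstP i).1)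
  have hlvlmono : Monotone lvl := by
    apply monotone_nat_of_le_succ
    intro i
    rcases (hstR i).2 with ⟨h1, -⟩ | ⟨h1, -⟩ <;>
      · have h1' : lvl (i + 1) = lvl i ∨ lvl (i + 1) = lvl i + 1 := by
          first
          | exact Or.inl h1
          | exact Or.inr h1
        omega
  have hdesc : ∀ (Len i : ℕ), (st i).2.length ≤ Len → ∃ j, lvl i < lvl j := by
    intro Len
    induction Len with
    | zero =>
      intro i hlen
      exact absurd (List.length_eq_zero_iff.mp (Nat.le_zero.mp hlen)) (hstP i).1
    | succ Len ih =>
      intro i hlen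
      rcases (hstR i).2 with ⟨h1, h2⟩ | ⟨h1, -⟩
      · have hlen' : (st (i + 1)).2.length ≤ Len := by
          have := congrArg List.length h2
          simp only [List.length_cons] at this
          omega
        obtain ⟨j, hj⟩ := ih (i + 1) hlen'
        have h1' : lvl (i + 1) = lvl i := h1
        exact ⟨j, by omega⟩
      · have h1' : lvl (i + 1) = lvl i + 1 := h1
        exact ⟨i + 1, by omega⟩
  have hunbdd : ∀ m, ∃ N, ∀ j, N ≤ j → m ≤ lvl j := by
    intro m
    induction m with
    | zero => exact ⟨0, fun j _ => Nat.zero_le _⟩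
    | succ m ih =>
      obtain ⟨N, hN⟩ := ih
      obtain ⟨j, hj⟩ := hdesc ((st N).2.length) N le_rfl
      refine ⟨j, fun i hi => ?_⟩
      have h1 := hlvlmono hi
      have h2 := hN N le_rfl
      omega
  have hcK : ∀ n, c n ⊆ K G v₀ := fun n =>
    (CompAt.subset (hcomp n)).trans Set.diff_subset
  have hgK : ∀ i, g i ∈ K G v₀ := fun i => hcK _ (hgmem i)
  have htail : ∀ m, ∃ N, ∀ j, N ≤ j → g j ∈ c m := by
    intro m
    obtain ⟨N, hN⟩ := hunbdd m
    exact ⟨N, fun j hj => hcanti (hN j hj) (hgmem j)⟩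
  have hfib : ∀ v, {i | g i = v}.Finite := by
    intro v
    by_cases hvK : v ∈ K G v₀
    · obtain ⟨N, hN⟩ := htail (G.dist v₀ v)
      apply (Set.finite_Iio N).subset
      intro i (hi : g i = v)
      by_contra hge
      have hge' : N ≤ i := by simpa [Set.mem_Iio, not_lt] using hge
      have h1 := (CompAt.subset (hcomp (G.dist v₀ v))) (hN i hge')
      rw [hi] at h1
      exact h1.2 (mem_B_dist hvK)
    · exact Set.finite_empty.subset fun i hi => absurd (hi ▸ hgK i) hvK
  -- loop erasure
  set gr : ℕ → ℕ := fun i => sSup {j | g j = g i} with hgrdef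
  have hgr_mem : ∀ i, g (gr i) = g i := by
    intro i
    have h : gr i ∈ {j | g j = g i} :=
      Nat.sSup_mem ⟨i, rfl⟩ ((hfib (g i)).bddAbove)
    exact h
  have hgr_le : ∀ i j, g j = g i → j ≤ gr i := by
    intro i j h
    exact le_csSup ((hfib (g i)).bddAbove) (by exact h)
  set mfun : ℕ → ℕ := iter (fun _ mk => gr (mk + 1)) (gr 0) with hmfun
  have hms : ∀ k, mfun (k + 1) = gr (mfun k + 1) := fun k => rfl
  have hgm0 : g (mfun 0) = g 0 := hgr_mem 0
  have hgms : ∀ k, g (mfun (k + 1)) = g (mfun k + 1) := fun k => hgr_mem _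
  have hmax : ∀ k j, g j = g (mfun k) → j ≤ mfun k := by
    intro k j h
    cases k with
    | zero => exact hgr_le 0 j (h.trans hgm0)
    | succ k => exact hgr_le (mfun k + 1) j (h.trans (hgms k))
  have hmlt : ∀ k, mfun k < mfun (k + 1) := by
    intro k
    have := hgr_le (mfun k + 1) (mfun k + 1) rfl
    rw [← hms k] at this
    omega
  have hmstrict : StrictMono mfun := strictMono_nat_of_lt_succ hmlt
  have hkm : ∀ k, k ≤ mfun k := by
    intro k
    induction k with
    | zero => exact Nat.zero_le _
    | succ k ih => have := hmlt k; omega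
  set f : ℕ → V := fun k => g (mfun k) with hf
  have hfadj : ∀ k, G.Adj (f k) (f (k + 1)) := by
    intro k
    show G.Adj (g (mfun k)) (g (mfun (k + 1)))
    rw [hgms k]
    exact hgadj (mfun k)
  have hfinj : Function.Injective f := by
    intro a b hab
    by_contra hne
    rcases Nat.lt_or_ge a b with hl | hge
    · have h1 : mfun b ≤ mfun a := hmax a (mfun b) hab.symm
      exact absurd (hmstrict hl) (not_lt.mpr h1)
    · have hl : b < a := by omega
      have h1 : mfun a ≤ mfun b := hmax b (mfun a) hab
      exact absurd (hmstrict hl) (not_lt.mpr h1)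
  have hftail : ∀ m, ∃ N, ∀ k, N ≤ k → f k ∈ c m := by
    intro m
    obtain ⟨N, hN⟩ := htail m
    exact ⟨N, fun k hk => hN (mfun k) (le_trans hk (hkm k))⟩
  -- apply the basis hypothesis
  obtain ⟨C, hC, hCS, N₁, hN₁⟩ := hbasis f ⟨hfinj, hfadj⟩ {v₀} (Set.finite_singleton v₀)
  have hv₀C : v₀ ∉ C := fun h =>
    (Set.eq_empty_iff_forall_notMem.mp hCS v₀) ⟨h, rfl⟩
  have hnbhd_fin : (nbhd G C).Finite := by
    apply ((hreg C hC).2.biUnion fun v _ => hG v).subset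
    rintro w ⟨hwC, v, hvC, hadj⟩
    exact Set.mem_biUnion (⟨hvC, w, hwC, hadj⟩ : v ∈ vBdry G C) hadj
  obtain ⟨n₀, hn₀⟩ := finite_subset_B (Set.inter_subset_right (s := nbhd G C))
    (hnbhd_fin.inter_of_left _)
  obtain ⟨N₂, hN₂⟩ := hftail n₀
  set j := max N₁ N₂ with hj
  have hjC : f j ∈ C := hN₁ j (le_max_left _ _)
  have hjc : f j ∈ c n₀ := hN₂ j (le_max_right _ _)
  have hsubC : c n₀ ⊆ C := by
    intro y hy
    have hcn : c n₀ = comp G (K G v₀ \ B G v₀ n₀) (f j) := CompAt.eq_comp (hcomp n₀) hjc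
    rw [hcn] at hy
    refine reach_subset_C ?_ hy hjC
    intro w hw hwA
    exact hwA.2 (hn₀ ⟨hw, hwA.1⟩)
  obtain ⟨mb, hmb⟩ := (hchP n₀).2.1.nonempty
  exact hxbad mb C hC hv₀C (((hchP n₀).2.2 mb hmb).2.trans hsubC)

end Stmt13Aux
end Chunk3

open Stmt13Aux

/-- Theorem 4(i): if `𝒞` is a nested set of regions of `G` defining a basis of `|G|`
(in particular, for every end and every finite vertex set `S` some `C ∈ 𝒞` avoiding `S`
contains a tail of every ray of that end), `δ(G) ≥ k`, and `δ⁺_G(C) ≥ k` for every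
`C ∈ 𝒞`, then `G` has a finite nonempty subgraph of minimum degree at least `k`. -/
theorem stmt13 (G : SimpleGraph V) (hG : LocFin G) (hinf : Infinite V) (k : ℕ)
    (𝒞 : Set (Set V))
    (hreg : ∀ C ∈ 𝒞, IsRegion G C)
    (hnested : ∀ C ∈ 𝒞, ∀ D ∈ 𝒞, C ⊆ D ∨ D ⊆ C ∨ C ∩ D = ∅)
    (hbasis : ∀ f, IsRay G f → ∀ S : Set V, S.Finite →
      ∃ C ∈ 𝒞, C ∩ S = ∅ ∧ HasTailIn f C)
    (hdeg : ∀ v, k ≤ (G.neighborSet v).ncard)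
    (hout : ∀ C ∈ 𝒞, minOutDegGE G C k) :
    ∃ H : G.Subgraph, H.verts.Finite ∧ H.verts.Nonempty ∧
      ∀ w ∈ H.verts, k ≤ (H.neighborSet w).ncard := by
  classical
  obtain ⟨v₀⟩ : Nonempty V := by haveI := hinf; infer_instance
  haveI : Inhabited V := ⟨v₀⟩
  by_cases hgood : ∃ n : ℕ, ∀ x ∈ K G v₀ \ B G v₀ n,
      (comp G (K G v₀ \ B G v₀ n) x).Infinite →
      ∃ C ∈ 𝒞, v₀ ∉ C ∧ comp G (K G v₀ \ B G v₀ n) x ⊆ C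
  · obtain ⟨n, hgood⟩ := hgood
    have hch : ∀ D : Set V, CompAt G v₀ n D → D.Infinite →
        ∃ C, C ∈ 𝒞 ∧ v₀ ∉ C ∧ D ⊆ C := by
      rintro D ⟨x, hx, rfl⟩ hinfD
      obtain ⟨C, hC1, hC2, hC3⟩ := hgood x hx hinfD
      exact ⟨C, hC1, hC2, hC3⟩
    choose! ch hch1 hch2 hch3 using hch
    set Sinf : Set (Set V) := {D | CompAt G v₀ n D ∧ D.Infinite} with hSinf
    have hSinffin : Sinf.Finite := (compAt_finite hG n).subset fun D hD => hD.1
    set 𝒟 : Set (Set V) := ch '' Sinf with h𝒟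
    have h𝒟fin : 𝒟.Finite := hSinffin.image ch
    have h𝒟𝒞 : ∀ Cc ∈ 𝒟, Cc ∈ 𝒞 := by
      rintro Cc ⟨D, hD, rfl⟩; exact hch1 D hD.1 hD.2
    have h𝒟v₀ : ∀ Cc ∈ 𝒟, v₀ ∉ Cc := by
      rintro Cc ⟨D, hD, rfl⟩; exact hch2 D hD.1 hD.2
    have h𝒟K : ∀ Cc ∈ 𝒟, Cc ⊆ K G v₀ := by
      rintro Cc ⟨D, hD, rfl⟩
      obtain ⟨y, hy⟩ := hD.2.nonempty
      have hyK : y ∈ K G v₀ := ((CompAt.subset hD.1) hy).1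
      exact conn_subset_K (hreg _ (hch1 D hD.1 hD.2)).1 (hch3 D hD.1 hD.2 hy) hyK
    set ℳ : Set (Set V) := {M | M ∈ 𝒟 ∧ ∀ C' ∈ 𝒟, M ⊆ C' → M = C'} with hℳ
    have hℳ𝒟 : ℳ ⊆ 𝒟 := fun M hM => hM.1
    have hmax : ∀ Cc ∈ 𝒟, ∃ M ∈ ℳ, Cc ⊆ M := by
      intro Cc hCc
      obtain ⟨M, hM, hMmax⟩ := Set.Finite.exists_maximalFor id {C' ∈ 𝒟 | Cc ⊆ C'}
        (h𝒟fin.subset fun C' hC' => hC'.1) ⟨Cc, hCc, subset_rfl⟩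
      refine ⟨M, ⟨hM.1, ?_⟩, hM.2⟩
      intro C' hC' hMC'
      exact subset_antisymm hMC' (hMmax ⟨hC', hM.2.trans hMC'⟩ hMC')
    have hℳdisj : ∀ M₁ ∈ ℳ, ∀ M₂ ∈ ℳ, M₁ ≠ M₂ → M₁ ∩ M₂ = ∅ := by
      intro M₁ hM₁ M₂ hM₂ hne12
      rcases hnested M₁ (h𝒟𝒞 _ hM₁.1) M₂ (h𝒟𝒞 _ hM₂.1) with h | h | h
      · exact absurd (hM₁.2 M₂ hM₂.1 h) hne12
      · exact absurd (hM₂.2 M₁ hM₁.1 h).symm hne12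
      · exact h
    set X : Set V := K G v₀ \ ⋃₀ 𝒟 with hX
    have hXfin : X.Finite := by
      have hfc : (⋃₀ {D : Set V | CompAt G v₀ n D ∧ D.Finite}).Finite :=
        Set.Finite.sUnion ((compAt_finite hG n).subset fun D hD => hD.1)
          fun D hD => hD.2
      apply ((B_finite hG n).union hfc).subset
      rintro v ⟨hvK, hv𝒟⟩
      by_cases hvB : v ∈ B G v₀ n
      · exact Or.inl hvB
      · right
        have hCA : CompAt G v₀ n (comp G (K G v₀ \ B G v₀ n) v) := ⟨v, ⟨hvK, hvB⟩, rfl⟩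
        by_cases hDinf : (comp G (K G v₀ \ B G v₀ n) v).Infinite
        · exact absurd ⟨ch (comp G (K G v₀ \ B G v₀ n) v), ⟨_, ⟨hCA, hDinf⟩, rfl⟩,
            hch3 _ hCA hDinf (mem_comp_self G _ v)⟩ hv𝒟
        · exact ⟨_, ⟨hCA, Set.not_infinite.mp hDinf⟩, mem_comp_self G _ v⟩
    set A : Set V := X ∪ ⋃ M ∈ ℳ, vBdry G M with hA
    have hAfin : A.Finite := hXfin.union ((h𝒟fin.subset hℳ𝒟).biUnion
      fun M hM => (hreg M (h𝒟𝒞 M (hℳ𝒟 hM))).2)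
    have hv₀X : v₀ ∈ X := by
      refine ⟨v₀_mem_K, fun h => ?_⟩
      obtain ⟨Cc, hCc, hv⟩ := h
      exact h𝒟v₀ Cc hCc hv
    have hXnb : ∀ v ∈ X, G.neighborSet v ⊆ A := by
      intro v hv w hw
      have hadj : G.Adj v w := hw
      have hwK : w ∈ K G v₀ := mem_K_of_adj hv.1 hadj
      by_cases hw𝒟 : w ∈ ⋃₀ 𝒟
      · obtain ⟨Cc, hCc, hwCc⟩ := hw𝒟
        obtain ⟨M, hM, hCcM⟩ := hmax Cc hCc
        have hvM : v ∉ M := fun hvM => hv.2 ⟨M, hℳ𝒟 hM, hvM⟩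
        exact Or.inr (Set.mem_biUnion hM ⟨hCcM hwCc, v, hvM, hadj.symm⟩)
      · exact Or.inl ⟨hwK, hw𝒟⟩
    refine buildSubgraph G k A hAfin ⟨v₀, Or.inl hv₀X⟩ ?_
    intro v hv
    rcases hv with hvX | hvB
    · rw [Set.inter_eq_self_of_subset_right (hXnb v hvX)]
      exact hdeg v
    · rw [Set.mem_iUnion₂] at hvB
      obtain ⟨M, hM, hvM⟩ := hvB
      have hsub : (nbhd G M ∪ vBdry G M) ∩ G.neighborSet v ⊆ A ∩ G.neighborSet v := by
        rintro w ⟨hw1, hw2⟩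
        refine ⟨?_, hw2⟩
        rcases hw1 with hwnb | hwbd
        · obtain ⟨hwM, v', hv'M, hadj⟩ := hwnb
          have hwK : w ∈ K G v₀ := mem_K_of_adj (h𝒟K M (hℳ𝒟 hM) hv'M) hadj
          by_cases hw𝒟 : w ∈ ⋃₀ 𝒟
          · obtain ⟨Cc, hCc, hwCc⟩ := hw𝒟
            obtain ⟨M', hM', hCcM'⟩ := hmax Cc hCc
            have hMM' : M ≠ M' := fun he => hwM (he ▸ hCcM' hwCc)
            have hdisj := hℳdisj M hM M' hM' hMM'
            have hv'M' : v' ∉ M' := fun hmem =>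
              (Set.eq_empty_iff_forall_notMem.mp hdisj v') ⟨hv'M, hmem⟩
            exact Or.inr (Set.mem_biUnion hM' ⟨hCcM' hwCc, v', hv'M', hadj.symm⟩)
          · exact Or.inl ⟨hwK, hw𝒟⟩
        · exact Or.inr (Set.mem_biUnion hM hwbd)
      exact le_trans (hout M (h𝒟𝒞 M (hℳ𝒟 hM)) v hvM)
        (Set.ncard_le_ncard hsub (hAfin.inter_of_left _))
  · exfalso
    push_neg at hgood
    refine bad_contra G hG v₀ 𝒞 hreg hbasis ?_
    intro n
    obtain ⟨x, hx, h1, h2⟩ := hgood n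
    exact ⟨x, hx, h1, h2⟩
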